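/- Let λ > 0 and p < 1, let A ∈ ℝ^{m×n} have spectral norm ‖A‖ < 1, and let b ∈ ℝᵐ. A point x ∈ ℝⁿ satisfies x = S_p(x − Aᵀ(Ax − b)) (i.e., x is a fixed point of the IPS iteration) if and only if x satisfies the first-order stationarity condition of F_p, namely: for every index j, if x_j ≠ 0 then λ·g_p'(x_j) + [Aᵀ(Ax − b)]_j = 0 (where g_p' denotes the derivative of g_p, which exists at every nonzero point), and if x_j = 0 then |[Aᵀ(Ax − b)]_j| ≤ λ. -/

import Mathlib

open MeasureTheory Filter
open scoped BigOperators

noncomputable section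

/-- `l0 w` is the number of nonzero entries of `w`. -/
def l0 {n : ℕ} (w : Fin n → ℝ) : ℕ := (Finset.univ.filter fun i => w i ≠ 0).card

/-- Euclidean (`ℓ²`) norm of a vector. -/
def l2 {k : ℕ} (v : Fin k → ℝ) : ℝ := Real.sqrt (∑ i, v i ^ 2)

/-- Restriction `h_T` of a vector to a finset `T` (zero outside `T`). -/
def restr {n : ℕ} (T : Finset (Fin n)) (h : Fin n → ℝ) : Fin n → ℝ :=
  fun i => if i ∈ T then h i else 0

/-- Unique Representation Property: every `m` columns of `A` are linearly independent. -/
def URP {m n : ℕ} (A : Matrix (Fin m) (Fin n) ℝ) : Prop :=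
  ∀ S : Finset (Fin n), S.card = m →
    LinearIndependent ℝ (fun j : S => (fun i : Fin m => A i (j : Fin n)))

/-- Conditions (I)-(II) on the penalty component `g`. -/
def PenaltyConds (g : ℝ → ℝ) : Prop :=
  g 0 = 0 ∧ (∀ w, g (-w) = g w) ∧ Continuous g ∧
    ((StrictMonoOn g (Set.Ioi 0) ∧ StrictConcaveOn ℝ (Set.Ioi 0) g) ∨
      (∃ γ : ℝ, 0 < γ ∧ StrictMonoOn g (Set.Ioc 0 γ) ∧
        StrictConcaveOn ℝ (Set.Ioc 0 γ) g ∧ ∀ w, γ ≤ w → g w = g γ))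

/-- Spectral (`ℓ² → ℓ²` operator) norm of a matrix. -/
def specNorm {m n : ℕ} (A : Matrix (Fin m) (Fin n) ℝ) : ℝ :=
  sSup {c | ∃ v : Fin n → ℝ, l2 v ≤ 1 ∧ c = l2 (A.mulVec v)}

/-- The `p`-shrinkage function `s_{λ,p}`. -/
def pshrinkFun (lam p t : ℝ) : ℝ :=
  if t ≤ 0 then 0 else max (t - lam ^ (2 - p) * t ^ (p - 1)) 0

/-- `f_p(x) = ∫₀ˣ s_{λ,p}(t) dt`. -/
def pf (lam p x : ℝ) : ℝ := ∫ t in (0 : ℝ)..x, pshrinkFun lam p t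

/-- Legendre–Fenchel transform `f_p*(w) = sup_{x ≥ 0} (x·w − f_p(x))`. -/
def pfstar (lam p w : ℝ) : ℝ := sSup ((fun x => x * w - pf lam p x) '' Set.Ici 0)

/-- The induced `p`-shrinkage penalty component `g_p`. -/
def gp (lam p w : ℝ) : ℝ := (pfstar lam p |w| - w ^ 2 / 2) / lam

/-- The induced `p`-shrinkage penalty `G_p`. -/
def Gp (lam p : ℝ) {n : ℕ} (w : Fin n → ℝ) : ℝ := ∑ i, gp lam p (w i)

/-- The `p`-shrinkage mapping `S_p`. -/
def Sp (lam p : ℝ) {n : ℕ} (x : Fin n → ℝ) : Fin n → ℝ :=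
  fun i => pshrinkFun lam p |x i| * Real.sign (x i)

/-- The objective `F_p(x) = λ G_p(x) + ½‖Ax − b‖₂²`. -/
def Fp (lam p : ℝ) {m n : ℕ} (A : Matrix (Fin m) (Fin n) ℝ) (b : Fin m → ℝ)
    (x : Fin n → ℝ) : ℝ :=
  lam * Gp lam p x + (1 / 2) * (l2 (A.mulVec x - b)) ^ 2

/-- Firm-thresholding penalty component. -/
def gfirm (μ w : ℝ) : ℝ := if |w| ≤ μ then |w| - w ^ 2 / (2 * μ) else μ / 2

/-- Firm-thresholding penalty. -/
def Gfirm (μ : ℝ) {n : ℕ} (w : Fin n → ℝ) : ℝ := ∑ i, gfirm μ (w i)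

/-- The `m × m` submatrix `A_S` of the columns of `A` indexed by `S`. -/
def colsub {m n : ℕ} (A : Matrix (Fin m) (Fin n) ℝ)
    (S : {S : Finset (Fin n) // S.card = m}) : Matrix (Fin m) (Fin m) ℝ :=
  Matrix.of fun i j => A i ((S.1.orderIsoOfFin S.2 j : Fin n))

/-- `α_S = ‖A_S⁻¹ b‖_{-∞}`. -/
def alphaS {m n : ℕ} (A : Matrix (Fin m) (Fin n) ℝ) (b : Fin m → ℝ)
    (S : {S : Finset (Fin n) // S.card = m}) : ℝ :=
  ⨅ i, |((colsub A S)⁻¹).mulVec b i|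

/-- `β_S = ‖A_S⁻¹ b‖_∞`. -/
def betaS {m n : ℕ} (A : Matrix (Fin m) (Fin n) ℝ) (b : Fin m → ℝ)
    (S : {S : Finset (Fin n) // S.card = m}) : ℝ :=
  ⨆ i, |((colsub A S)⁻¹).mulVec b i|

/-- `‖A_S⁻¹‖` (spectral norm). -/
def nrmInv {m n : ℕ} (A : Matrix (Fin m) (Fin n) ℝ)
    (S : {S : Finset (Fin n) // S.card = m}) : ℝ :=
  specNorm ((colsub A S)⁻¹)

set_option linter.unusedVariables false

namespace Aux

variable {lam p : ℝ}

lemma s_nonneg (lam p t : ℝ) : 0 ≤ pshrinkFun lam p t := by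
  unfold pshrinkFun; split
  · exact le_rfl
  · exact le_max_right _ _

lemma fact_mul (hp : p < 1) {t : ℝ} (ht : 0 < t) :
    t ^ (p - 1) * t ^ (2 - p) = t := by
  rw [← Real.rpow_add ht]
  norm_num

lemma s_eq_zero (hlam : 0 < lam) (hp : p < 1) {t : ℝ} (ht0 : 0 ≤ t) (htl : t ≤ lam) :
    pshrinkFun lam p t = 0 := by
  unfold pshrinkFun
  split
  · rfl
  · rename_i h
    push_neg at h
    have h1 : t ^ (2 - p) ≤ lam ^ (2 - p) :=
      Real.rpow_le_rpow ht0 htl (by linarith)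
    have h2 : 0 < t ^ (p - 1) := Real.rpow_pos_of_pos h _
    have h3 : t ≤ lam ^ (2 - p) * t ^ (p - 1) := by
      calc t = t ^ (p - 1) * t ^ (2 - p) := (fact_mul hp h).symm
      _ ≤ t ^ (p - 1) * lam ^ (2 - p) := by nlinarith
      _ = lam ^ (2 - p) * t ^ (p - 1) := by ring
    simp [max_eq_right (by linarith : t - lam ^ (2 - p) * t ^ (p - 1) ≤ 0)]

lemma s_eq_inner (hlam : 0 < lam) (hp : p < 1) {t : ℝ} (htl : lam ≤ t) :
    pshrinkFun lam p t = t - lam ^ (2 - p) * t ^ (p - 1) := by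
  have ht : 0 < t := lt_of_lt_of_le hlam htl
  unfold pshrinkFun
  rw [if_neg (by linarith)]
  have h1 : lam ^ (2 - p) ≤ t ^ (2 - p) :=
    Real.rpow_le_rpow hlam.le htl (by linarith)
  have h2 : 0 < t ^ (p - 1) := Real.rpow_pos_of_pos ht _
  have h3 : lam ^ (2 - p) * t ^ (p - 1) ≤ t := by
    calc lam ^ (2 - p) * t ^ (p - 1) ≤ t ^ (2 - p) * t ^ (p - 1) := by nlinarith
    _ = t := by rw [mul_comm]; exact fact_mul hp ht
  exact max_eq_left (by linarith)

lemma s_strictMonoOn (hlam : 0 < lam) (hp : p < 1) :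
    StrictMonoOn (pshrinkFun lam p) (Set.Ici lam) := by
  intro a ha b hb hab
  rw [Set.mem_Ici] at ha hb
  rw [s_eq_inner hlam hp ha, s_eq_inner hlam hp hb]
  have ha0 : 0 < a := lt_of_lt_of_le hlam ha
  have h1 : b ^ (p - 1) ≤ a ^ (p - 1) :=
    Real.rpow_le_rpow_of_nonpos ha0 hab.le (by linarith)
  have h2 : 0 < lam ^ (2 - p) := Real.rpow_pos_of_pos hlam _
  nlinarith

lemma s_mono (hlam : 0 < lam) (hp : p < 1) {a b : ℝ} (ha : 0 ≤ a) (hab : a ≤ b) :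
    pshrinkFun lam p a ≤ pshrinkFun lam p b := by
  rcases le_or_gt a lam with h | h
  · rw [s_eq_zero hlam hp ha h]; exact s_nonneg lam p b
  · exact ((s_strictMonoOn hlam hp).monotoneOn h.le (le_trans h.le hab) hab)

lemma s_cont (hlam : 0 < lam) (hp : p < 1) : Continuous (pshrinkFun lam p) := by
  rw [continuous_iff_continuousAt]
  intro a
  rcases lt_or_ge a lam with ha | ha
  · have h : (fun _ : ℝ => (0:ℝ)) =ᶠ[nhds a] pshrinkFun lam p := by
      filter_upwards [Iio_mem_nhds ha] with t ht
      rcases le_or_gt t 0 with h0 | h0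
      · simp [pshrinkFun, if_pos h0]
      · exact (s_eq_zero hlam hp h0.le (le_of_lt ht)).symm
    exact continuousAt_const.congr h
  · have ha0 : 0 < a := lt_of_lt_of_le hlam ha
    have hc : ContinuousAt (fun t : ℝ => max (t - lam ^ (2 - p) * t ^ (p - 1)) 0) a := by
      exact ((continuousAt_id.sub
        (continuousAt_const.mul (Real.continuousAt_rpow_const a (p - 1)
          (Or.inl ha0.ne')))).max continuousAt_const)
    have h : (fun t : ℝ => max (t - lam ^ (2 - p) * t ^ (p - 1)) 0) =ᶠ[nhds a]
        pshrinkFun lam p := by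
      filter_upwards [Ioi_mem_nhds ha0] with t ht
      simp [pshrinkFun, if_neg (not_le.2 (Set.mem_Ioi.1 ht))]
    exact hc.congr h

end Aux

namespace Aux

variable {lam p : ℝ}

lemma pf_sub (hlam : 0 < lam) (hp : p < 1) (a b : ℝ) :
    pf lam p b - pf lam p a = ∫ t in a..b, pshrinkFun lam p t := by
  have h := intervalIntegral.integral_add_adjacent_intervals
    ((s_cont hlam hp).intervalIntegrable (μ := MeasureTheory.volume) 0 a)
    ((s_cont hlam hp).intervalIntegrable (μ := MeasureTheory.volume) a b)
  unfold pf
  linarith [h]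

lemma pf_bounds (hlam : 0 < lam) (hp : p < 1) {a b : ℝ} (h0 : 0 ≤ a) (hab : a ≤ b) :
    pshrinkFun lam p a * (b - a) ≤ pf lam p b - pf lam p a ∧
      pf lam p b - pf lam p a ≤ pshrinkFun lam p b * (b - a) := by
  rw [pf_sub hlam hp]
  have hi := (s_cont hlam hp).intervalIntegrable (μ := MeasureTheory.volume) a b
  constructor
  · have := intervalIntegral.integral_mono_on (μ := MeasureTheory.volume) hab
      (intervalIntegrable_const) hi
      (fun t ht => s_mono hlam hp h0 ht.1)
    rwa [intervalIntegral.integral_const, smul_eq_mul, mul_comm] at this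
  · have := intervalIntegral.integral_mono_on (μ := MeasureTheory.volume) hab
      hi (intervalIntegrable_const)
      (fun t ht => s_mono hlam hp (le_trans h0 ht.1) ht.2)
    rwa [intervalIntegral.integral_const, smul_eq_mul, mul_comm] at this

lemma s_lam (hlam : 0 < lam) (hp : p < 1) : pshrinkFun lam p lam = 0 :=
  s_eq_zero hlam hp hlam.le le_rfl

lemma exX (hlam : 0 < lam) (hp : p < 1) {w : ℝ} (hw : 0 ≤ w) :
    ∃ t, lam ≤ t ∧ pshrinkFun lam p t = w := by
  set M := 2 * lam + w with hM
  have hlM : lam ≤ M := by linarith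
  have hsM : w ≤ pshrinkFun lam p M := by
    rw [s_eq_inner hlam hp hlM]
    have h1 : M ^ (p - 1) ≤ lam ^ (p - 1) :=
      Real.rpow_le_rpow_of_nonpos hlam hlM (by linarith)
    have h2 : 0 < lam ^ (2 - p) := Real.rpow_pos_of_pos hlam _
    have h3 : lam ^ (2 - p) * lam ^ (p - 1) = lam := by
      rw [← Real.rpow_add hlam]; norm_num
    nlinarith
  have := intermediate_value_Icc hlM ((s_cont hlam hp).continuousOn)
  have hmem : w ∈ Set.Icc (pshrinkFun lam p lam) (pshrinkFun lam p M) := by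
    rw [s_lam hlam hp]; exact ⟨hw, hsM⟩
  obtain ⟨t, ht, hst⟩ := this hmem
  exact ⟨t, ht.1, hst⟩

end Aux

/-- the inverse of the shrinkage function on `[lam, ∞)` -/
def Xc (lam p w : ℝ) : ℝ := sInf {t | lam ≤ t ∧ pshrinkFun lam p t = w}

namespace Aux

lemma Xc_spec (hlam : 0 < lam) (hp : p < 1) {w : ℝ} (hw : 0 ≤ w) :
    lam ≤ Xc lam p w ∧ pshrinkFun lam p (Xc lam p w) = w := by
  obtain ⟨t, ht⟩ := exX hlam hp hw
  have hset : {t' | lam ≤ t' ∧ pshrinkFun lam p t' = w} = {t} := by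
    ext t'
    simp only [Set.mem_setOf_eq, Set.mem_singleton_iff]
    constructor
    · rintro ⟨h1, h2⟩
      exact (s_strictMonoOn hlam hp).injOn h1 ht.1 (h2.trans ht.2.symm)
    · rintro rfl; exact ht
  unfold Xc
  rw [hset, csInf_singleton]
  exact ht

lemma Xc_gt (hlam : 0 < lam) (hp : p < 1) {w : ℝ} (hw : 0 < w) :
    lam < Xc lam p w := by
  obtain ⟨h1, h2⟩ := Xc_spec hlam hp hw.le
  rcases h1.lt_or_eq with h | h
  · exact h
  · exfalso; rw [← h, s_lam hlam hp] at h2; linarith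

lemma Xc_mono (hlam : 0 < lam) (hp : p < 1) {w1 w2 : ℝ} (h1 : 0 ≤ w1) (h2 : 0 ≤ w2)
    (h : w1 ≤ w2) : Xc lam p w1 ≤ Xc lam p w2 := by
  by_contra hlt
  push_neg at hlt
  have := (s_strictMonoOn hlam hp) (Xc_spec hlam hp h2).1 (Xc_spec hlam hp h1).1 hlt
  rw [(Xc_spec hlam hp h1).2, (Xc_spec hlam hp h2).2] at this
  linarith

lemma pfstar_key (hlam : 0 < lam) (hp : p < 1) {w : ℝ} (hw : 0 ≤ w) {x : ℝ} (hx : 0 ≤ x) :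
    x * w - pf lam p x ≤ Xc lam p w * w - pf lam p (Xc lam p w) := by
  obtain ⟨hX1, hX2⟩ := Xc_spec hlam hp hw
  have hX0 : (0:ℝ) ≤ Xc lam p w := le_trans hlam.le hX1
  rcases le_total x (Xc lam p w) with h | h
  · have hb := (pf_bounds hlam hp hx h).2
    rw [hX2] at hb
    nlinarith
  · have hb := (pf_bounds hlam hp hX0 h).1
    rw [hX2] at hb
    nlinarith

lemma pfstar_eq (hlam : 0 < lam) (hp : p < 1) {w : ℝ} (hw : 0 ≤ w) :
    pfstar lam p w = Xc lam p w * w - pf lam p (Xc lam p w) := by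
  apply IsGreatest.csSup_eq
  constructor
  · exact ⟨Xc lam p w, le_trans hlam.le (Xc_spec hlam hp hw).1, rfl⟩
  · rintro y ⟨x, hx, rfl⟩
    exact pfstar_key hlam hp hw hx

lemma pfstar_ge (hlam : 0 < lam) (hp : p < 1) {w1 w2 : ℝ} (h1 : 0 ≤ w1) (h2 : 0 ≤ w2) :
    Xc lam p w1 * w2 - pf lam p (Xc lam p w1) ≤ pfstar lam p w2 := by
  rw [pfstar_eq hlam hp h2]
  exact pfstar_key hlam hp h2 (le_trans hlam.le (Xc_spec hlam hp h1).1)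

end Aux

namespace Aux

lemma Xc_cont (hlam : 0 < lam) (hp : p < 1) {w : ℝ} (hw : 0 < w) {ε : ℝ} (hε : 0 < ε) :
    ∀ᶠ w' in nhds w, 0 < w' ∧ |Xc lam p w' - Xc lam p w| ≤ ε := by
  set t0 := Xc lam p w with ht0def
  have ht0 : lam < t0 := Xc_gt hlam hp hw
  have hst0 : pshrinkFun lam p t0 = w := (Xc_spec hlam hp hw.le).2
  set a := max lam (t0 - ε) with ha
  set b := t0 + ε with hb
  have hal : lam ≤ a := le_max_left _ _
  have hat : a < t0 := max_lt ht0 (by linarith)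
  have htb : t0 < b := by simp [hb]; linarith
  have hsa : pshrinkFun lam p a < w := by
    have := s_strictMonoOn hlam hp hal (le_trans hal hat.le) hat
    rwa [hst0] at this
  have hsb : w < pshrinkFun lam p b := by
    have := s_strictMonoOn hlam hp (le_trans hal hat.le) (le_trans hal (hat.trans htb).le) htb
    rwa [hst0] at this
  set δ := min (w - pshrinkFun lam p a) (pshrinkFun lam p b - w) with hδ
  have hδpos : 0 < δ := lt_min (by linarith) (by linarith)
  rw [Metric.eventually_nhds_iff]
  refine ⟨δ, hδpos, fun w' hw' => ?_⟩
  rw [Real.dist_eq] at hw'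
  have habs := abs_lt.1 hw'
  have hsa' : pshrinkFun lam p a < w' := by
    have := min_le_left (w - pshrinkFun lam p a) (pshrinkFun lam p b - w)
    linarith [habs.1]
  have hsb' : w' < pshrinkFun lam p b := by
    have := min_le_right (w - pshrinkFun lam p a) (pshrinkFun lam p b - w)
    linarith [habs.2]
  have hw'pos : 0 < w' := lt_of_le_of_lt (s_nonneg lam p a) hsa'
  refine ⟨hw'pos, ?_⟩
  obtain ⟨hX1, hX2⟩ := Xc_spec hlam hp hw'pos.le
  set t' := Xc lam p w'
  have hta : a < t' := by
    by_contra hc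
    push_neg at hc
    have := (s_strictMonoOn hlam hp).monotoneOn hX1 hal hc
    rw [hX2] at this
    linarith
  have htb' : t' < b := by
    by_contra hc
    push_neg at hc
    have := (s_strictMonoOn hlam hp).monotoneOn (le_trans hal (hat.trans htb).le) hX1 hc
    rw [hX2] at this
    linarith
  rw [abs_le]
  constructor
  · have : t0 - ε ≤ a := le_max_right _ _
    linarith
  · simp only [hb] at htb'
    linarith

lemma hasDerivAt_pfstar (hlam : 0 < lam) (hp : p < 1) {w : ℝ} (hw : 0 < w) :
    HasDerivAt (pfstar lam p) (Xc lam p w) w := by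
  rw [hasDerivAt_iff_isLittleO]
  rw [Asymptotics.isLittleO_iff]
  intro ε hε
  filter_upwards [Xc_cont hlam hp hw hε] with w' ⟨hw'pos, hXc⟩
  have key : |pfstar lam p w' - pfstar lam p w - (w' - w) * Xc lam p w| ≤
      |Xc lam p w' - Xc lam p w| * |w' - w| := by
    have e1 := pfstar_eq hlam hp hw.le
    have e2 := pfstar_eq hlam hp hw'pos.le
    rcases le_total w w' with h | h
    · have hX := Xc_mono hlam hp hw.le hw'pos.le h
      have h1 : Xc lam p w * w' - pf lam p (Xc lam p w) ≤ pfstar lam p w' :=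
        pfstar_ge hlam hp hw.le hw'pos.le
      have h2 : Xc lam p w' * w - pf lam p (Xc lam p w') ≤ pfstar lam p w :=
        pfstar_ge hlam hp hw'pos.le hw.le
      rw [abs_of_nonneg (by nlinarith), abs_of_nonneg (by linarith),
        abs_of_nonneg (by linarith)]
      nlinarith
    · have hX := Xc_mono hlam hp hw'pos.le hw.le h
      have h1 : Xc lam p w * w' - pf lam p (Xc lam p w) ≤ pfstar lam p w' :=
        pfstar_ge hlam hp hw.le hw'pos.le
      have h2 : Xc lam p w' * w - pf lam p (Xc lam p w') ≤ pfstar lam p w :=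
        pfstar_ge hlam hp hw'pos.le hw.le
      rw [abs_of_nonneg (by nlinarith), abs_of_nonpos (by linarith),
        abs_of_nonpos (by linarith)]
      nlinarith
  calc ‖pfstar lam p w' - pfstar lam p w - (w' - w) • Xc lam p w‖
      = |pfstar lam p w' - pfstar lam p w - (w' - w) * Xc lam p w| := by
        rw [smul_eq_mul]; rfl
    _ ≤ |Xc lam p w' - Xc lam p w| * |w' - w| := key
    _ ≤ ε * |w' - w| := by
        apply mul_le_mul_of_nonneg_right hXc (abs_nonneg _)
    _ = ε * ‖w' - w‖ := rfl

lemma hasDerivAt_gp_pos (hlam : 0 < lam) (hp : p < 1) {w : ℝ} (hw : 0 < w) :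
    HasDerivAt (gp lam p) ((Xc lam p w - w) / lam) w := by
  have h1 : HasDerivAt (fun w' => (pfstar lam p w' - w' ^ 2 / 2) / lam)
      ((Xc lam p w - w) / lam) w := by
    have h2 : HasDerivAt (fun w' : ℝ => w' ^ 2 / 2) w w := by
      have := (hasDerivAt_pow 2 w).div_const 2
      exact this.congr_deriv (by norm_num)
    exact ((hasDerivAt_pfstar hlam hp hw).sub h2).div_const lam
  apply h1.congr_of_eventuallyEq
  filter_upwards [Ioi_mem_nhds hw] with w' hw'
  unfold gp
  rw [abs_of_pos (Set.mem_Ioi.1 hw')]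

lemma hasDerivAt_gp_neg (hlam : 0 < lam) (hp : p < 1) {w : ℝ} (hw : w < 0) :
    HasDerivAt (gp lam p) ((-(Xc lam p (-w)) - w) / lam) w := by
  have h1 : HasDerivAt (fun w' : ℝ => pfstar lam p (-w')) (-(Xc lam p (-w))) w := by
    have := (hasDerivAt_pfstar hlam hp (by linarith : (0:ℝ) < -w)).comp w (hasDerivAt_neg w)
    exact this.congr_deriv (by ring)
  have h2 : HasDerivAt (fun w' : ℝ => w' ^ 2 / 2) w w := by
    have := (hasDerivAt_pow 2 w).div_const 2
    exact this.congr_deriv (by norm_num)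
  have h3 := (h1.sub h2).div_const lam
  apply h3.congr_of_eventuallyEq
  filter_upwards [Iio_mem_nhds hw] with w' hw'
  unfold gp
  rw [abs_of_neg (Set.mem_Iio.1 hw')]
  rfl

lemma deriv_gp_pos (hlam : 0 < lam) (hp : p < 1) {w : ℝ} (hw : 0 < w) :
    deriv (gp lam p) w = (Xc lam p w - w) / lam :=
  (hasDerivAt_gp_pos hlam hp hw).deriv

lemma deriv_gp_neg (hlam : 0 < lam) (hp : p < 1) {w : ℝ} (hw : w < 0) :
    deriv (gp lam p) w = (-(Xc lam p (-w)) - w) / lam :=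
  (hasDerivAt_gp_neg hlam hp hw).deriv

end Aux

namespace Aux

lemma s_pos (hlam : 0 < lam) (hp : p < 1) {t : ℝ} (ht : lam < t) :
    0 < pshrinkFun lam p t := by
  have := s_strictMonoOn hlam hp (Set.mem_Ici.2 le_rfl) (Set.mem_Ici.2 ht.le) ht
  rwa [s_lam hlam hp] at this

lemma coord (hlam : 0 < lam) (hp : p < 1) (u t : ℝ) :
    (u = pshrinkFun lam p |u - t| * Real.sign (u - t)) ↔
      ((u ≠ 0 → lam * deriv (gp lam p) u + t = 0) ∧ (u = 0 → |t| ≤ lam)) := by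
  rcases lt_trichotomy u 0 with hu | hu | hu
  · -- u < 0
    have hv : (0:ℝ) < -u := by linarith
    obtain ⟨hX1, hX2⟩ := Xc_spec hlam hp hv.le
    have hder : lam * deriv (gp lam p) u = -(Xc lam p (-u)) - u := by
      rw [deriv_gp_neg hlam hp hu]; field_simp
    constructor
    · intro h
      refine ⟨fun _ => ?_, fun h0 => absurd h0 hu.ne⟩
      rw [hder]
      have hyt : u - t < 0 := by
        by_contra hc
        push_neg at hc
        rcases hc.lt_or_eq with hlt | heq
        · rw [Real.sign_of_pos hlt] at h
          have := s_nonneg lam p |u - t|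
          nlinarith
        · rw [← heq, Real.sign_zero, mul_zero] at h
          linarith
      rw [Real.sign_of_neg hyt, abs_of_neg hyt] at h
      -- h : u = pshrinkFun lam p (-(u - t)) * (-1)
      have h' : pshrinkFun lam p (-(u - t)) = -u := by linarith
      have hgt : lam < -(u - t) := by
        by_contra hc
        push_neg at hc
        rw [s_eq_zero hlam hp (by linarith) hc] at h'
        linarith
      have heq : -(u - t) = Xc lam p (-u) :=
        (s_strictMonoOn hlam hp).injOn hgt.le hX1 (h'.trans hX2.symm)
      linarith
    · rintro ⟨h1, -⟩
      have he := h1 hu.ne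
      rw [hder] at he
      have hy : u - t = -(Xc lam p (-u)) := by linarith
      have hXpos : 0 < Xc lam p (-u) := lt_trans hlam (Xc_gt hlam hp hv)
      rw [hy, Real.sign_of_neg (by linarith), abs_of_neg (by linarith), neg_neg, hX2]
      ring
  · -- u = 0
    subst hu
    constructor
    · intro h
      refine ⟨fun h' => absurd rfl h', fun _ => ?_⟩
      by_contra hc
      push_neg at hc
      have ht0 : t ≠ 0 := by
        intro h0
        rw [h0, abs_zero] at hc
        linarith
      have hspos : 0 < pshrinkFun lam p |0 - t| := by
        apply s_pos hlam hp
        rwa [zero_sub, abs_neg]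
      rcases lt_trichotomy t 0 with h1 | h1 | h1
      · rw [Real.sign_of_pos (by linarith : (0:ℝ) < 0 - t)] at h
        nlinarith
      · exact ht0 h1
      · rw [Real.sign_of_neg (by linarith : (0:ℝ) - t < 0)] at h
        nlinarith
    · rintro ⟨-, h2⟩
      have hle := h2 rfl
      rw [zero_sub, abs_neg, s_eq_zero hlam hp (abs_nonneg t) hle, zero_mul]
  · -- 0 < u
    obtain ⟨hX1, hX2⟩ := Xc_spec hlam hp hu.le
    have hder : lam * deriv (gp lam p) u = Xc lam p u - u := by
      rw [deriv_gp_pos hlam hp hu]; field_simp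
    constructor
    · intro h
      refine ⟨fun _ => ?_, fun h0 => absurd h0 hu.ne'⟩
      rw [hder]
      have hyt : 0 < u - t := by
        by_contra hc
        push_neg at hc
        rcases hc.lt_or_eq with hlt | heq
        · rw [Real.sign_of_neg hlt] at h
          have := s_nonneg lam p |u - t|
          nlinarith
        · rw [heq, Real.sign_zero, mul_zero] at h
          linarith
      rw [Real.sign_of_pos hyt, abs_of_pos hyt, mul_one] at h
      have hgt : lam < u - t := by
        by_contra hc
        push_neg at hc
        rw [s_eq_zero hlam hp hyt.le hc] at h
        linarith
      have heq : u - t = Xc lam p u :=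
        (s_strictMonoOn hlam hp).injOn hgt.le hX1 (h.symm.trans hX2.symm)
      linarith
    · rintro ⟨h1, -⟩
      have he := h1 hu.ne'
      rw [hder] at he
      have hy : u - t = Xc lam p u := by linarith
      have hXpos : 0 < Xc lam p u := lt_trans hlam (Xc_gt hlam hp hu)
      rw [hy, Real.sign_of_pos hXpos, abs_of_pos hXpos, hX2, mul_one]

end Aux

/-- fixed points of the IPS iteration are exactly the first-order
stationary points of `F_p`. -/
theorem stmt15 (lam p : ℝ) (hlam : 0 < lam) (hp : p < 1)
    {m n : ℕ} (A : Matrix (Fin m) (Fin n) ℝ) (hA : specNorm A < 1)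
    (b : Fin m → ℝ) (x : Fin n → ℝ) :
    x = Sp lam p (x - A.transpose.mulVec (A.mulVec x - b)) ↔
      ∀ j : Fin n,
        (x j ≠ 0 →
          lam * deriv (gp lam p) (x j) + A.transpose.mulVec (A.mulVec x - b) j = 0) ∧
        (x j = 0 → |A.transpose.mulVec (A.mulVec x - b) j| ≤ lam) := by
  rw [funext_iff]
  apply forall_congr'
  intro j
  have := Aux.coord hlam hp (x j) (A.transpose.mulVec (A.mulVec x - b) j)
  simpa [Sp, Pi.sub_apply] using this

end
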